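/- arXiv:2308.00409 — 2 statements merged into one kernel-verified Lean document; each statement's English description precedes it below -/
import Mathlib

section
/- Let n ≥ 2, let f : [0, ∞) → ℝ be non-negative and locally Lipschitz with f(s) ≤ B'(1 + s^{q₁}) for all s ≥ 0, for some constants B' > 0 and q₁ ∈ (0, 1), and let κ ∈ C¹(closure B₁) be non-negative. Then there exists a constant C > 0, depending only on n, q₁, B', and ‖κ‖_{L^∞(B₁)}, such that any solution u ∈ C²(B₁) ∩ C⁰(closure B₁) of −Δu = κ f(u) in B₁, u > 0 in B₁, u = 0 on ∂B₁, satisfies ‖u‖_{L^∞(B₁)} ≤ C. -/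
open Metric Set MeasureTheory Filter
open scoped Pointwise ENNReal NNReal
open scoped Topology

noncomputable section

/-- The Laplacian of a function `u : ℝⁿ → ℝ`. -/
def lap {n : ℕ} (u : EuclideanSpace ℝ (Fin n) → ℝ) (x : EuclideanSpace ℝ (Fin n)) : ℝ :=
  ∑ i, fderiv ℝ (fun y => fderiv ℝ u y (EuclideanSpace.single i 1)) x (EuclideanSpace.single i 1)

/-- The radial derivative `∂_r v (x) = (x/|x|) ⬝ ∇v(x)`. -/
def radDeriv {n : ℕ} (v : EuclideanSpace ℝ (Fin n) → ℝ) (x : EuclideanSpace ℝ (Fin n)) : ℝ :=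
  (inner ℝ (‖x‖⁻¹ • x) (gradient v x) : ℝ)

/-- The angular gradient `∇^T v (x) = ∇v(x) - (∂_r v(x)) x/|x|`. -/
def angGrad {n : ℕ} (v : EuclideanSpace ℝ (Fin n) → ℝ) (x : EuclideanSpace ℝ (Fin n)) :
    EuclideanSpace ℝ (Fin n) :=
  gradient v x - radDeriv v x • (‖x‖⁻¹ • x)

/-- Sup of `|v|` over a set, i.e. the `L^∞` norm of a continuous function. -/
def supAbsOn {n : ℕ} (s : Set (EuclideanSpace ℝ (Fin n))) (v : EuclideanSpace ℝ (Fin n) → ℝ) : ℝ :=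
  ⨆ x : s, |v x.1|

/-- The deficit `def(κ) = ‖∇^T κ‖_{L^∞(B₁)} + ‖∂_r⁺ κ‖_{L^∞(B₁)}`. -/
def deficit {n : ℕ} (κ : EuclideanSpace ℝ (Fin n) → ℝ) : ℝ :=
  (⨆ x : (ball (0 : EuclideanSpace ℝ (Fin n)) 1 \ {0} : Set (EuclideanSpace ℝ (Fin n))),
      ‖angGrad κ x.1‖) +
  (⨆ x : (ball (0 : EuclideanSpace ℝ (Fin n)) 1 \ {0} : Set (EuclideanSpace ℝ (Fin n))),
      max (radDeriv κ x.1) 0)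





/-- Second derivative test at a local max. -/
lemma second_deriv_nonpos_of_isLocalMax {g : ℝ → ℝ}
    (hg : ∀ᶠ t in 𝓝 (0:ℝ), DifferentiableAt ℝ g t)
    (hg' : DifferentiableAt ℝ (deriv g) (0:ℝ))
    (hmax : IsLocalMax g 0) : deriv (deriv g) 0 ≤ 0 := by
  by_contra hcon
  push_neg at hcon
  have h0 : deriv g 0 = 0 := hmax.deriv_eq_zero
  have hslope : Tendsto (fun t => deriv g t / t) (𝓝[≠] (0:ℝ)) (𝓝 (deriv (deriv g) 0)) := by
    have h := hg'.hasDerivAt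
    rw [hasDerivAt_iff_tendsto_slope] at h
    have : (slope (deriv g) 0) = fun t => deriv g t / t := by
      funext t; simp [slope_def_field, h0]
    rwa [this] at h
  have hev : ∀ᶠ t in 𝓝[>] (0:ℝ), 0 < deriv g t := by
    have h1 : ∀ᶠ t in 𝓝[≠] (0:ℝ), 0 < deriv g t / t := hslope.eventually (lt_mem_nhds hcon)
    have h2 : 𝓝[>] (0:ℝ) ≤ 𝓝[≠] (0:ℝ) := nhdsWithin_mono _ (fun t ht => ne_of_gt ht)
    filter_upwards [h2 h1, self_mem_nhdsWithin] with t ht ht'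
    have htpos : (0:ℝ) < t := ht'
    have := mul_pos ht htpos
    rwa [div_mul_cancel₀ _ (ne_of_gt htpos)] at this
  obtain ⟨δ₁, hδ₁, H1⟩ := Metric.eventually_nhds_iff.mp (hg.and hmax)
  obtain ⟨δ₂, hδ₂, H2⟩ := mem_nhdsGT_iff_exists_Ioc_subset.mp hev
  have hδ₂' : (0:ℝ) < δ₂ := hδ₂
  set r : ℝ := min (δ₁ / 2) δ₂ with hr
  have hrpos : 0 < r := lt_min (by linarith) hδ₂'
  have hrδ : ∀ x ∈ Icc (0:ℝ) r, dist x 0 < δ₁ := by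
    intro x hx
    rw [Real.dist_eq, sub_zero, abs_of_nonneg hx.1]
    have : r ≤ δ₁ / 2 := min_le_left _ _
    linarith [hx.2]
  have hmono : StrictMonoOn g (Icc (0:ℝ) r) := by
    apply strictMonoOn_of_deriv_pos (convex_Icc _ _)
    · intro x hx
      exact ((H1 (hrδ x hx)).1).continuousAt.continuousWithinAt
    · intro x hx
      rw [interior_Icc] at hx
      exact H2 ⟨hx.1, le_trans hx.2.le (min_le_right _ _)⟩
  have h1 : g 0 < g r := hmono (left_mem_Icc.mpr hrpos.le) (right_mem_Icc.mpr hrpos.le) hrpos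
  have h2 : g r ≤ g 0 := (H1 (hrδ r (right_mem_Icc.mpr hrpos.le))).2
  linarith

/-- Differentiability of directional derivative function. -/
lemma fderiv_apply_diffAt {n : ℕ} {u : EuclideanSpace ℝ (Fin n) → ℝ}
    {s : Set (EuclideanSpace ℝ (Fin n))} (hs : IsOpen s) (hu : ContDiffOn ℝ 2 u s)
    {x : EuclideanSpace ℝ (Fin n)} (hx : x ∈ s) (v : EuclideanSpace ℝ (Fin n)) :
    DifferentiableAt ℝ (fun y => fderiv ℝ u y v) x := by
  have h2 : ContDiffAt ℝ 2 u x := hu.contDiffAt (hs.mem_nhds hx)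
  have h1 : ContDiffAt ℝ 1 (fderiv ℝ u) x := h2.fderiv_right (by norm_num)
  exact (h1.differentiableAt one_ne_zero).clm_apply (differentiableAt_const v)

lemma dir_second_nonpos {n : ℕ} {u : EuclideanSpace ℝ (Fin n) → ℝ}
    {s : Set (EuclideanSpace ℝ (Fin n))} (hs : IsOpen s) (hu : ContDiffOn ℝ 2 u s)
    {x₀ : EuclideanSpace ℝ (Fin n)} (hx₀ : x₀ ∈ s) (hmax : IsLocalMax u x₀)
    (v : EuclideanSpace ℝ (Fin n)) :
    fderiv ℝ (fun y => fderiv ℝ u y v) x₀ v ≤ 0 := by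
  set ℓ : ℝ → EuclideanSpace ℝ (Fin n) := fun t => x₀ + t • v with hℓdef
  have hℓ : ∀ t : ℝ, HasDerivAt ℓ v t := by
    intro t
    have : HasDerivAt (fun t : ℝ => t • v) ((1:ℝ) • v) t := (hasDerivAt_id t).smul_const v
    simpa [hℓdef] using this.const_add x₀
  have hℓ0 : ℓ 0 = x₀ := by simp [hℓdef]
  have hℓc : Continuous ℓ := by
    apply Continuous.add continuous_const
    exact continuous_id.smul continuous_const
  have hℓt : Tendsto ℓ (𝓝 0) (𝓝 x₀) := by
    have := hℓc.tendsto 0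
    rwa [hℓ0] at this
  have hmem : ∀ᶠ t in 𝓝 (0:ℝ), ℓ t ∈ s := hℓt.eventually_mem (hs.mem_nhds hx₀)
  have hudiff : ∀ y ∈ s, DifferentiableAt ℝ u y := fun y hy =>
    ((hu.contDiffAt (hs.mem_nhds hy)).differentiableAt (by norm_num))
  set g : ℝ → ℝ := fun t => u (ℓ t) with hgdef
  have hg : ∀ᶠ t in 𝓝 (0:ℝ), DifferentiableAt ℝ g t ∧ deriv g t = fderiv ℝ u (ℓ t) v := by
    filter_upwards [hmem] with t ht
    have hd : HasDerivAt g (fderiv ℝ u (ℓ t) v) t :=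
      ((hudiff _ ht).hasFDerivAt).comp_hasDerivAt t (hℓ t)
    exact ⟨hd.differentiableAt, hd.deriv⟩
  have hderiv_eq : deriv g =ᶠ[𝓝 (0:ℝ)] fun t => fderiv ℝ u (ℓ t) v := hg.mono fun t ht => ht.2
  have hFl : HasDerivAt (fun t => fderiv ℝ u (ℓ t) v) (fderiv ℝ (fun z => fderiv ℝ u z v) x₀ v) 0 := by
    have hls : ℓ 0 ∈ s := by rw [hℓ0]; exact hx₀
    have hd := ((fderiv_apply_diffAt hs hu hls v).hasFDerivAt).comp_hasDerivAt 0 (hℓ 0)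
    rw [hℓ0] at hd
    exact hd
  have h2 : deriv (deriv g) 0 = fderiv ℝ (fun z => fderiv ℝ u z v) x₀ v := by
    rw [hderiv_eq.deriv_eq]
    exact hFl.deriv
  rw [← h2]
  apply second_deriv_nonpos_of_isLocalMax
  · exact hg.mono fun t ht => ht.1
  · exact (hderiv_eq.differentiableAt_iff).mpr hFl.differentiableAt
  · have h := hℓt.eventually hmax
    have hg0 : g 0 = u x₀ := by rw [hgdef]; simp [hℓ0]
    filter_upwards [h] with t ht
    rw [hg0]; exact ht

lemma lap_nonpos_of_isLocalMax {n : ℕ} {u : EuclideanSpace ℝ (Fin n) → ℝ}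
    {s : Set (EuclideanSpace ℝ (Fin n))} (hs : IsOpen s) (hu : ContDiffOn ℝ 2 u s)
    {x₀ : EuclideanSpace ℝ (Fin n)} (hx₀ : x₀ ∈ s) (hmax : IsLocalMax u x₀) :
    lap u x₀ ≤ 0 :=
  Finset.sum_nonpos fun i _ => dir_second_nonpos hs hu hx₀ hmax _

/-- fderiv of `∑ j, y j ^ 2`. -/
lemma phi_hasFDerivAt {n : ℕ} (y : EuclideanSpace ℝ (Fin n)) :
    HasFDerivAt (fun z : EuclideanSpace ℝ (Fin n) => ∑ j, z j ^ 2)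
      (∑ j, (2 * y j) • EuclideanSpace.proj (𝕜 := ℝ) j) y := by
  apply HasFDerivAt.fun_sum
  intro j _
  have h1 : HasFDerivAt (fun z : EuclideanSpace ℝ (Fin n) => z j)
      (EuclideanSpace.proj (𝕜 := ℝ) j) y := (EuclideanSpace.proj (𝕜 := ℝ) j).hasFDerivAt
  have h2 := h1.fun_mul h1
  have h3 : (fun z : EuclideanSpace ℝ (Fin n) => z j * z j) = fun z => z j ^ 2 := by
    funext z; ring
  rw [h3] at h2
  rw [two_mul, add_smul]
  exact h2

lemma phi_fderiv_single {n : ℕ} (y : EuclideanSpace ℝ (Fin n)) (i : Fin n) :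
    (∑ j, (2 * y j) • EuclideanSpace.proj (𝕜 := ℝ) j) (EuclideanSpace.single i (1:ℝ)) = 2 * y i := by
  rw [ContinuousLinearMap.sum_apply]
  rw [Finset.sum_eq_single i]
  · simp [EuclideanSpace.single_apply]
  · intro j _ hj
    simp [EuclideanSpace.single_apply, hj]
  · intro h
    exact absurd (Finset.mem_univ i) h

lemma lap_add_quad {n : ℕ} {u : EuclideanSpace ℝ (Fin n) → ℝ}
    (hu : ContDiffOn ℝ 2 u (ball (0 : EuclideanSpace ℝ (Fin n)) 1))
    {x : EuclideanSpace ℝ (Fin n)} (hx : x ∈ ball (0 : EuclideanSpace ℝ (Fin n)) 1) (c : ℝ) :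
    lap (fun y => u y + c * ∑ j, y j ^ 2) x = lap u x + 2 * n * c := by
  have hudiff : ∀ y ∈ ball (0 : EuclideanSpace ℝ (Fin n)) 1, DifferentiableAt ℝ u y := fun y hy =>
    ((hu.contDiffAt (isOpen_ball.mem_nhds hy)).differentiableAt (by norm_num))
  have key : ∀ i : Fin n,
      fderiv ℝ (fun y => fderiv ℝ (fun z => u z + c * ∑ j, z j ^ 2) y (EuclideanSpace.single i 1)) x
        (EuclideanSpace.single i 1)
      = fderiv ℝ (fun y => fderiv ℝ u y (EuclideanSpace.single i 1)) x (EuclideanSpace.single i 1)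
        + 2 * c := by
    intro i
    have hEv : (fun y => fderiv ℝ (fun z => u z + c * ∑ j, z j ^ 2) y (EuclideanSpace.single i 1))
        =ᶠ[𝓝 x] fun y => fderiv ℝ u y (EuclideanSpace.single i 1) + c * (2 * y i) := by
      filter_upwards [isOpen_ball.mem_nhds hx] with y hy
      have hsum : HasFDerivAt (fun z : EuclideanSpace ℝ (Fin n) => u z + c * ∑ j, z j ^ 2)
          (fderiv ℝ u y + c • (∑ j, (2 * y j) • EuclideanSpace.proj (𝕜 := ℝ) j)) y :=
        ((hudiff y hy).hasFDerivAt).add ((phi_hasFDerivAt y).const_mul c)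
      rw [hsum.fderiv]
      rw [ContinuousLinearMap.add_apply, ContinuousLinearMap.smul_apply, phi_fderiv_single]
      simp [smul_eq_mul]
    rw [hEv.fderiv_eq]
    have hF : DifferentiableAt ℝ (fun y => fderiv ℝ u y (EuclideanSpace.single i 1)) x :=
      fderiv_apply_diffAt isOpen_ball hu hx _
    have hlin : HasFDerivAt (fun y : EuclideanSpace ℝ (Fin n) => c * (2 * y i))
        ((c * 2) • EuclideanSpace.proj (𝕜 := ℝ) i) x := by
      have h1 : HasFDerivAt (fun y : EuclideanSpace ℝ (Fin n) => (c * 2) * y i)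
          ((c * 2) • EuclideanSpace.proj (𝕜 := ℝ) i) x :=
        ((EuclideanSpace.proj (𝕜 := ℝ) i).hasFDerivAt).const_mul (c * 2)
      convert h1 using 2
      ring
    rw [fderiv_fun_add hF hlin.differentiableAt, ContinuousLinearMap.add_apply, hlin.fderiv]
    simp [EuclideanSpace.single_apply, smul_eq_mul]
    ring
  unfold lap
  rw [Finset.sum_congr rfl fun i _ => key i, Finset.sum_add_distrib]
  simp [Finset.card_univ]
  ring

/-- **Step 1 of the proof of Corollary 1.3: uniform upper bound, sublinear case.** If `f` is
strictly sublinear at infinity, every solution is uniformly bounded above, with a constant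
depending only on `n`, `q₁`, `B'`, and `‖κ‖_{L^∞(B₁)}` (bounded by `K`). -/
theorem uniform_upper_bound_sublinear
    (n : ℕ) (hn : 2 ≤ n) (B' q₁ K : ℝ) (hB' : 0 < B') (hq₁ : q₁ ∈ Set.Ioo (0 : ℝ) 1) :
    ∃ C : ℝ, 0 < C ∧
      ∀ (f : ℝ → ℝ) (κ u : EuclideanSpace ℝ (Fin n) → ℝ),
        (∀ s : ℝ, 0 ≤ s → 0 ≤ f s) →
        (∀ M : ℝ, 0 < M → ∃ K' : NNReal, LipschitzOnWith K' f (Set.Icc 0 M)) →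
        (∀ s : ℝ, 0 ≤ s → f s ≤ B' * (1 + s ^ q₁)) →
        ContDiffOn ℝ 1 κ (closure (ball (0 : EuclideanSpace ℝ (Fin n)) 1)) →
        (∀ x ∈ closure (ball (0 : EuclideanSpace ℝ (Fin n)) 1), 0 ≤ κ x) →
        (∀ x ∈ ball (0 : EuclideanSpace ℝ (Fin n)) 1, κ x ≤ K) →
        ContDiffOn ℝ 2 u (ball (0 : EuclideanSpace ℝ (Fin n)) 1) →
        ContinuousOn u (closure (ball (0 : EuclideanSpace ℝ (Fin n)) 1)) →
        (∀ x ∈ ball (0 : EuclideanSpace ℝ (Fin n)) 1, -lap u x = κ x * f (u x)) →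
        (∀ x ∈ ball (0 : EuclideanSpace ℝ (Fin n)) 1, 0 < u x) →
        (∀ x ∈ sphere (0 : EuclideanSpace ℝ (Fin n)) 1, u x = 0) →
        supAbsOn (ball (0 : EuclideanSpace ℝ (Fin n)) 1) u ≤ C := by
  obtain ⟨hq₀, hq₁'⟩ := hq₁
  have hnpos : (0:ℝ) < (n : ℝ) := by
    have : (2:ℝ) ≤ (n:ℝ) := by exact_mod_cast hn
    linarith
  have h2n : (0:ℝ) < 2 * n := by linarith
  set D : ℝ := max (K * B' / (2 * n)) 1 with hD
  have hD1 : (1:ℝ) ≤ D := le_max_right _ _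
  set C : ℝ := max 1 ((2 * D) ^ ((1:ℝ) / (1 - q₁))) with hC
  refine ⟨C, lt_of_lt_of_le one_pos (le_max_left _ _), ?_⟩
  intro f κ u hf0 _hlip hfB _hκ hκ0 hκK hu hucont heq hupos hubdry
  haveI : Nonempty (ball (0 : EuclideanSpace ℝ (Fin n)) 1 : Set (EuclideanSpace ℝ (Fin n))) :=
    ⟨⟨0, mem_ball_self one_pos⟩⟩
  have hclos : closure (ball (0 : EuclideanSpace ℝ (Fin n)) 1)
      = closedBall (0 : EuclideanSpace ℝ (Fin n)) 1 := closure_ball 0 one_ne_zero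
  rw [hclos] at hucont hκ0
  set M : ℝ := supAbsOn (ball (0 : EuclideanSpace ℝ (Fin n)) 1) u with hM
  obtain ⟨R, hR⟩ :=
    (isCompact_closedBall (0 : EuclideanSpace ℝ (Fin n)) 1).exists_bound_of_continuousOn hucont
  have hbdd : BddAbove (Set.range fun x : (ball (0 : EuclideanSpace ℝ (Fin n)) 1 :
      Set (EuclideanSpace ℝ (Fin n))) => |u x.1|) := by
    refine ⟨R, ?_⟩
    rintro r ⟨x, rfl⟩
    exact hR x.1 (ball_subset_closedBall x.2)
  have hle_M : ∀ x ∈ ball (0 : EuclideanSpace ℝ (Fin n)) 1, u x ≤ M := by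
    intro x hx
    exact (le_abs_self _).trans (le_ciSup hbdd ⟨x, hx⟩)
  have hM0 : 0 ≤ M :=
    le_trans (abs_nonneg _) (le_ciSup hbdd ⟨0, mem_ball_self one_pos⟩)
  have hK0 : 0 ≤ K :=
    le_trans (hκ0 0 (mem_closedBall_self zero_le_one)) (hκK 0 (mem_ball_self one_pos))
  have hMq0 : 0 ≤ M ^ q₁ := Real.rpow_nonneg hM0 _
  set A : ℝ := K * B' * (1 + M ^ q₁) with hA
  have hA0 : 0 ≤ A := by
    apply mul_nonneg (mul_nonneg hK0 hB'.le)
    linarith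
  have hlapb : ∀ x ∈ ball (0 : EuclideanSpace ℝ (Fin n)) 1, -lap u x ≤ A := by
    intro x hx
    rw [heq x hx]
    have h1 : f (u x) ≤ B' * (1 + M ^ q₁) := by
      refine (hfB _ (hupos x hx).le).trans ?_
      have := Real.rpow_le_rpow (hupos x hx).le (hle_M x hx) hq₀.le
      nlinarith
    have h2 : 0 ≤ f (u x) := hf0 _ (hupos x hx).le
    calc κ x * f (u x) ≤ K * (B' * (1 + M ^ q₁)) :=
          mul_le_mul (hκK x hx) h1 h2 hK0
      _ = A := by rw [hA]; ring
  have key : ∀ x ∈ closedBall (0 : EuclideanSpace ℝ (Fin n)) 1, u x ≤ A / (2 * n) := by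
    intro x hx
    have hε : ∀ ε : ℝ, 0 < ε → u x ≤ (A + ε) / (2 * n) := by
      intro ε hεpos
      set c : ℝ := (A + ε) / (2 * n) with hc
      have hc0 : 0 < c := div_pos (by linarith) h2n
      set w : EuclideanSpace ℝ (Fin n) → ℝ := fun y => u y + c * ∑ j, y j ^ 2 with hw
      have hφC2' : ContDiff ℝ 2 (fun y : EuclideanSpace ℝ (Fin n) => c * ∑ j, y j ^ 2) := by
        apply ContDiff.mul contDiff_const
        apply ContDiff.sum
        intro j _
        have h1 : ContDiff ℝ 2 (fun y : EuclideanSpace ℝ (Fin n) => y j) :=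
          ((EuclideanSpace.proj (𝕜 := ℝ) j).contDiff).of_le le_top
        exact h1.pow 2
      have hφc : Continuous (fun y : EuclideanSpace ℝ (Fin n) => c * ∑ j, y j ^ 2) :=
        hφC2'.continuous
      have hwcont : ContinuousOn w (closedBall (0 : EuclideanSpace ℝ (Fin n)) 1) :=
        hucont.add hφc.continuousOn
      obtain ⟨x₀, hx₀, hmax⟩ :=
        (isCompact_closedBall (0 : EuclideanSpace ℝ (Fin n)) 1).exists_isMaxOn
          ⟨0, mem_closedBall_self zero_le_one⟩ hwcont
      have hbound : ∀ y ∈ closedBall (0 : EuclideanSpace ℝ (Fin n)) 1, w y ≤ c := by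
        by_cases hball : x₀ ∈ ball (0 : EuclideanSpace ℝ (Fin n)) 1
        · exfalso
          have hloc : IsLocalMax w x₀ := by
            filter_upwards [isOpen_ball.mem_nhds hball] with y hy
            exact hmax (ball_subset_closedBall hy)
          have hφC2 : ContDiffOn ℝ 2 (fun y : EuclideanSpace ℝ (Fin n) => c * ∑ j, y j ^ 2)
              (ball (0 : EuclideanSpace ℝ (Fin n)) 1) := hφC2'.contDiffOn
          have hwC2 : ContDiffOn ℝ 2 w (ball (0 : EuclideanSpace ℝ (Fin n)) 1) := hu.add hφC2
          have h1 : lap w x₀ ≤ 0 := lap_nonpos_of_isLocalMax isOpen_ball hwC2 hball hloc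
          have h2 : lap w x₀ = lap u x₀ + 2 * n * c := lap_add_quad hu hball c
          have h3 : -lap u x₀ ≤ A := hlapb x₀ hball
          have h4 : 2 * (n:ℝ) * c = A + ε := by
            rw [hc]
            field_simp
          rw [h2, h4] at h1
          linarith
        · have hx₀s : x₀ ∈ sphere (0 : EuclideanSpace ℝ (Fin n)) 1 := by
            have h1 : dist x₀ 0 ≤ 1 := mem_closedBall.mp hx₀
            have h2 : ¬ dist x₀ 0 < 1 := fun h => hball (mem_ball.mpr h)
            exact mem_sphere.mpr (le_antisymm h1 (not_lt.mp h2))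
          have hnorm : ‖x₀‖ = 1 := by
            have := mem_sphere.mp hx₀s
            rwa [dist_zero_right] at this
          have hsum : ∑ j, x₀ j ^ 2 = 1 := by
            have h1 := EuclideanSpace.norm_eq x₀
            rw [hnorm] at h1
            have h2 : ∑ j, ‖x₀ j‖ ^ 2 = 1 := by
              have hnn : 0 ≤ ∑ j, ‖x₀ j‖ ^ 2 := Finset.sum_nonneg fun j _ => sq_nonneg _
              calc ∑ j, ‖x₀ j‖ ^ 2 = Real.sqrt (∑ j, ‖x₀ j‖ ^ 2) ^ 2 := (Real.sq_sqrt hnn).symm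
                _ = 1 := by rw [← h1]; norm_num
            simpa [Real.norm_eq_abs, sq_abs] using h2
          intro y hy
          calc w y ≤ w x₀ := hmax hy
            _ = 0 + c * 1 := by rw [hw]; simp only []; rw [hubdry x₀ hx₀s, hsum]
            _ = c := by ring
      have hwx : u x + c * ∑ j, x j ^ 2 ≤ c := hbound x hx
      have hφ0 : 0 ≤ ∑ j, x j ^ 2 := Finset.sum_nonneg fun j _ => sq_nonneg _
      have hux : u x ≤ c := by nlinarith [mul_nonneg hc0.le hφ0]
      rwa [hc] at hux
    have h2n' : (0:ℝ) < 2 * (n:ℝ) := h2n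
    refine le_of_forall_pos_le_add ?_
    intro ε hεpos
    have := hε (ε * (2 * n)) (by positivity)
    calc u x ≤ (A + ε * (2 * n)) / (2 * n) := this
      _ = A / (2 * n) + ε := by field_simp
  have hMle : M ≤ A / (2 * n) := by
    refine ciSup_le fun x => ?_
    rw [abs_of_pos (hupos x.1 x.2)]
    exact key x.1 (ball_subset_closedBall x.2)
  have hM1 : M ≤ D * (1 + M ^ q₁) := by
    have h1 : A / (2 * n) = K * B' / (2 * n) * (1 + M ^ q₁) := by
      rw [hA]; ring
    have h2 : (0:ℝ) ≤ 1 + M ^ q₁ := by linarith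
    calc M ≤ A / (2 * n) := hMle
      _ = K * B' / (2 * n) * (1 + M ^ q₁) := h1
      _ ≤ D * (1 + M ^ q₁) := mul_le_mul_of_nonneg_right (le_max_left _ _) h2
  by_cases hMsmall : M ≤ 1
  · exact hMsmall.trans (le_max_left _ _)
  push_neg at hMsmall
  have hMpos : 0 < M := lt_trans one_pos hMsmall
  have h1 : 1 ≤ M ^ q₁ := Real.one_le_rpow hMsmall.le hq₀.le
  have h2 : M ≤ 2 * D * M ^ q₁ := by nlinarith
  have hMqpos : 0 < M ^ q₁ := Real.rpow_pos_of_pos hMpos _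
  have h3 : M ^ (1 - q₁) ≤ 2 * D := by
    rw [Real.rpow_sub hMpos, Real.rpow_one, div_le_iff₀ hMqpos]
    exact h2
  have hq1ne : (1:ℝ) - q₁ ≠ 0 := by linarith
  have h4 : M = (M ^ ((1:ℝ) - q₁)) ^ ((1:ℝ) / (1 - q₁)) := by
    rw [← Real.rpow_mul hMpos.le, mul_one_div, div_self hq1ne, Real.rpow_one]
  calc M = (M ^ ((1:ℝ) - q₁)) ^ ((1:ℝ) / (1 - q₁)) := h4
    _ ≤ (2 * D) ^ ((1:ℝ) / (1 - q₁)) :=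
        Real.rpow_le_rpow (Real.rpow_nonneg hMpos.le _) h3
          (by have h5 : (0:ℝ) < 1 - q₁ := by linarith
              positivity)
    _ ≤ C := le_max_right _ _
end
end

section
/- Let n ≥ 2, let f : [0, ∞) → ℝ be non-negative, locally Lipschitz, and satisfy f(0) > 0, and let κ ∈ C¹(closure B₁) satisfy κ ≥ κ₀ in B₁ for some constant κ₀ > 0. Then there exists a constant c > 0, depending only on n, f, and κ₀, such that any solution u ∈ C²(B₁) ∩ C⁰(closure B₁) of −Δu = κ f(u) in B₁, u > 0 in B₁, u = 0 on ∂B₁, satisfies u(x) ≥ c(1 − |x|²) for all x ∈ B₁; in particular ‖u‖_{L^∞(B₁)} ≥ c. -/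
open Metric Set MeasureTheory Filter
open scoped Pointwise ENNReal NNReal

noncomputable section

/-- Second derivative test: at an interior local minimum, the second derivative is nonneg. -/
lemma second_deriv_nonneg_at_localMin {g G : ℝ → ℝ} {d : ℝ} (hmin : IsLocalMin g 0)
    (hg : ∀ᶠ t in nhds 0, HasDerivAt g (G t) t) (hG : HasDerivAt G d 0) : 0 ≤ d := by
  by_contra hd
  push_neg at hd
  have hG0 : G 0 = 0 := hmin.hasDerivAt_eq_zero hg.self_of_nhds
  have hslope : Tendsto (slope G 0) (nhdsWithin 0 {(0:ℝ)}ᶜ) (nhds d) :=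
    hasDerivAt_iff_tendsto_slope.1 hG
  have hneg : ∀ᶠ t in nhdsWithin 0 {(0:ℝ)}ᶜ, slope G 0 t < 0 :=
    hslope.eventually_lt_const hd
  have hneg' : ∀ᶠ t in nhdsWithin (0:ℝ) (Ioi 0), G t < 0 := by
    filter_upwards [nhdsWithin_mono (0:ℝ) (fun t (ht : t ∈ Ioi (0:ℝ)) => ne_of_gt ht) hneg,
      self_mem_nhdsWithin] with t ht ht0
    have h4 : t⁻¹ * G t < 0 := by simpa [slope, hG0] using ht
    have h3 : 0 < t⁻¹ := inv_pos.2 ht0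
    nlinarith
  -- extract radii
  obtain ⟨r₁, hr₁, h₁⟩ := Metric.eventually_nhds_iff.1 hg
  obtain ⟨r₀, hr₀, h₀⟩ := Metric.eventually_nhds_iff.1 (hmin : ∀ᶠ t in nhds 0, g 0 ≤ g t)
  obtain ⟨uu, huu, h₂⟩ := mem_nhdsGT_iff_exists_Ioo_subset.1 hneg'
  set r := min (min (r₁/2) (r₀/2)) (uu/2) with hr
  have hrpos : 0 < r := by
    have : (0:ℝ) < uu := huu
    positivity
  have hrr₁ : r < r₁ := lt_of_le_of_lt (le_trans (min_le_left _ _) (min_le_left _ _)) (by linarith)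
  have hrr₀ : r < r₀ := lt_of_le_of_lt (le_trans (min_le_left _ _) (min_le_right _ _)) (by linarith)
  have hruu : r < uu := lt_of_le_of_lt (min_le_right _ _) (by
    have : (0:ℝ) < uu := huu; linarith)
  have hderiv : ∀ t ∈ Icc (0:ℝ) r, HasDerivAt g (G t) t := by
    intro t ht
    apply h₁
    rw [Real.dist_eq, sub_zero, abs_of_nonneg ht.1]
    exact lt_of_le_of_lt ht.2 hrr₁
  have hanti : StrictAntiOn g (Icc (0:ℝ) r) := by
    apply strictAntiOn_of_deriv_neg (convex_Icc 0 r)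
    · exact fun t ht => (hderiv t ht).continuousAt.continuousWithinAt
    · intro t ht
      rw [interior_Icc] at ht
      rw [(hderiv t ⟨le_of_lt ht.1, le_of_lt ht.2⟩).deriv]
      exact h₂ ⟨ht.1, lt_trans ht.2 hruu⟩
  have h1 : g r < g 0 :=
    hanti (left_mem_Icc.2 (le_of_lt hrpos)) (right_mem_Icc.2 (le_of_lt hrpos)) hrpos
  have h2 : g 0 ≤ g r := h₀ (by rw [Real.dist_eq, sub_zero, abs_of_nonneg (le_of_lt hrpos)]; exact hrr₀)
  linarith

/-- **Step 2 of the proof of Corollary 1.3: uniform lower bound when `f(0) > 0`.** Comparison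
with a multiple of the torsion function gives `u(x) ≥ c (1 - |x|²)`, and in particular
`‖u‖_{L^∞(B₁)} ≥ c`, with `c` depending only on `n`, `f`, and `κ₀`. -/
theorem uniform_lower_bound_f0_positive
    (n : ℕ) (hn : 2 ≤ n) (f : ℝ → ℝ)
    (hf_nonneg : ∀ s : ℝ, 0 ≤ s → 0 ≤ f s)
    (hf_lip : ∀ M : ℝ, 0 < M → ∃ K' : NNReal, LipschitzOnWith K' f (Set.Icc 0 M))
    (hf0 : 0 < f 0)
    (κ₀ : ℝ) (hκ₀ : 0 < κ₀) :
    ∃ c : ℝ, 0 < c ∧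
      ∀ (κ u : EuclideanSpace ℝ (Fin n) → ℝ),
        ContDiffOn ℝ 1 κ (closure (ball (0 : EuclideanSpace ℝ (Fin n)) 1)) →
        (∀ x ∈ ball (0 : EuclideanSpace ℝ (Fin n)) 1, κ₀ ≤ κ x) →
        ContDiffOn ℝ 2 u (ball (0 : EuclideanSpace ℝ (Fin n)) 1) →
        ContinuousOn u (closure (ball (0 : EuclideanSpace ℝ (Fin n)) 1)) →
        (∀ x ∈ ball (0 : EuclideanSpace ℝ (Fin n)) 1, -lap u x = κ x * f (u x)) →
        (∀ x ∈ ball (0 : EuclideanSpace ℝ (Fin n)) 1, 0 < u x) →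
        (∀ x ∈ sphere (0 : EuclideanSpace ℝ (Fin n)) 1, u x = 0) →
        (∀ x ∈ ball (0 : EuclideanSpace ℝ (Fin n)) 1, c * (1 - ‖x‖ ^ 2) ≤ u x) ∧
        c ≤ supAbsOn (ball (0 : EuclideanSpace ℝ (Fin n)) 1) u := by
  classical
  obtain ⟨K, hK⟩ := hf_lip 1 one_pos
  have hK0 : (0:ℝ) ≤ (K:ℝ) := K.2
  set ε : ℝ := min (min 1 (f 0 / (2 * ((K:ℝ) + 1)))) (κ₀ * f 0 / 4) with hεdef
  have hεpos : 0 < ε := lt_min (lt_min one_pos (by positivity)) (by positivity)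
  have hε1 : ε ≤ 1 := le_trans (min_le_left _ _) (min_le_left _ _)
  have hεf : ∀ s : ℝ, 0 ≤ s → s ≤ ε → 2 * ε ≤ κ₀ * f s := by
    intro s hs0 hsε
    have hs1 : s ≤ 1 := le_trans hsε hε1
    have hsδ : s ≤ f 0 / (2 * ((K:ℝ) + 1)) :=
      le_trans hsε (le_trans (min_le_left _ _) (min_le_right _ _))
    have hd : dist (f s) (f 0) ≤ (K:ℝ) * dist s 0 :=
      hK.dist_le_mul s ⟨hs0, hs1⟩ 0 ⟨le_refl 0, zero_le_one⟩
    rw [Real.dist_eq, Real.dist_eq, sub_zero, abs_of_nonneg hs0] at hd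
    have habs := abs_le.1 hd
    have hKe : f 0 / (2 * ((K:ℝ) + 1)) * (2 * ((K:ℝ) + 1)) = f 0 :=
      div_mul_cancel₀ _ (by positivity)
    have h5 : (K:ℝ) * s ≤ f 0 / 2 := by nlinarith
    have h6 : f 0 / 2 ≤ f s := by linarith [habs.1]
    have h7 : ε ≤ κ₀ * f 0 / 4 := min_le_right _ _
    nlinarith
  have hnR : (2:ℝ) ≤ (n:ℝ) := by exact_mod_cast hn
  set c : ℝ := ε / (2 * (n:ℝ)) with hcdef
  have hcpos : 0 < c := by
    apply div_pos hεpos; linarith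
  have hcε : c ≤ ε := div_le_self hεpos.le (by linarith)
  have h2nc : 2 * (n:ℝ) * c = ε := by
    rw [hcdef]; field_simp
  refine ⟨c, hcpos, ?_⟩
  intro κ u hκC hκlb hu2 huc heq hupos hubd
  have hB : IsOpen (ball (0:EuclideanSpace ℝ (Fin n)) 1) := isOpen_ball
  have hclos : closure (ball (0:EuclideanSpace ℝ (Fin n)) 1) = closedBall 0 1 := closure_ball _ one_ne_zero
  rw [hclos] at huc
  set v : EuclideanSpace ℝ (Fin n) → ℝ := fun x => u x - c * (1 - ‖x‖ ^ 2) with hvdef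
  have hvc : ContinuousOn v (closedBall (0:EuclideanSpace ℝ (Fin n)) 1) := by
    rw [hvdef]
    exact huc.sub (by fun_prop)
  obtain ⟨x₀, hx₀K, hx₀min⟩ := (isCompact_closedBall (0:EuclideanSpace ℝ (Fin n)) 1).exists_isMinOn
    ⟨0, mem_closedBall_self zero_le_one⟩ hvc
  -- key claim : the minimum of v is nonnegative
  have hv0 : 0 ≤ v x₀ := by
    by_contra hneg
    push_neg at hneg
    -- the minimum point is interior
    have hx₀le : ‖x₀‖ ≤ 1 := mem_closedBall_zero_iff.1 hx₀K
    have hx₀ball : x₀ ∈ ball (0:EuclideanSpace ℝ (Fin n)) 1 := by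
      rcases lt_or_eq_of_le hx₀le with h | h
      · exact mem_ball_zero_iff.2 h
      · exfalso
        have hs : x₀ ∈ sphere (0:EuclideanSpace ℝ (Fin n)) 1 := by rwa [mem_sphere_zero_iff_norm]
        have h0 := hubd x₀ hs
        have : v x₀ = 0 := by rw [hvdef]; simp only; rw [h0, h]; ring
        linarith
    have huxpos := hupos x₀ hx₀ball
    have huxε : u x₀ ≤ ε := by
      have h1 : u x₀ < c * (1 - ‖x₀‖ ^ 2) := by
        have : v x₀ = u x₀ - c * (1 - ‖x₀‖ ^ 2) := rfl
        linarith
      nlinarith [norm_nonneg x₀, sq_nonneg ‖x₀‖]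
    -- PDE gives lap u x₀ ≤ -2ε
    have hlaple : lap u x₀ ≤ -(2 * ε) := by
      have h1 := heq x₀ hx₀ball
      have h2 := mul_le_mul_of_nonneg_right (hκlb x₀ hx₀ball) (hf_nonneg (u x₀) huxpos.le)
      have h3 := hεf (u x₀) huxpos.le huxε
      linarith
    -- second derivative test gives lap u x₀ ≥ -2nc = -ε
    have hu1 : ContDiffOn ℝ 1 (fderiv ℝ u) (ball (0:EuclideanSpace ℝ (Fin n)) 1) :=
      hu2.fderiv_of_isOpen hB (by norm_num)
    have hudiff : DifferentiableOn ℝ u (ball (0:EuclideanSpace ℝ (Fin n)) 1) := hu2.differentiableOn (by norm_num)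
    have hsummand : ∀ i : Fin n, -(2 * c) ≤
        fderiv ℝ (fun y => fderiv ℝ u y (EuclideanSpace.single i 1)) x₀
          (EuclideanSpace.single i 1) := by
      intro i
      set e : EuclideanSpace ℝ (Fin n) := EuclideanSpace.single i (1:ℝ) with hedef
      have he : ‖e‖ = 1 := by rw [hedef]; simp [EuclideanSpace.norm_single]
      set L : ℝ → EuclideanSpace ℝ (Fin n) := fun t => x₀ + t • e with hLdef
      have hLcont : Continuous L := by fun_prop
      have hL0 : L 0 = x₀ := by simp [hLdef]
      have hLd : ∀ t : ℝ, HasDerivAt L e t := by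
        intro t
        have := (((hasDerivAt_id t).smul_const e).const_add x₀)
        simp only [one_smul] at this
        exact this
      set a : ℝ := (inner ℝ x₀ e : ℝ) with hadef
      have hnorm : ∀ t : ℝ, ‖L t‖ ^ 2 = ‖x₀‖ ^ 2 + 2 * a * t + t ^ 2 := by
        intro t
        have h1 : ‖L t‖ ^ 2 = ‖x₀‖ ^ 2 + 2 * (inner ℝ x₀ (t • e) : ℝ) + ‖t • e‖ ^ 2 :=
          norm_add_sq_real x₀ (t • e)
        rw [h1, real_inner_smul_right, norm_smul, he]
        simp [Real.norm_eq_abs, sq_abs, ← hadef]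
        ring
      set g : ℝ → ℝ := fun t => v (L t) with hgdef
      have hgmin : IsLocalMin g 0 := by
        have h8 : Tendsto L (nhds 0) (nhds x₀) := by
          rw [← hL0]; exact hLcont.tendsto 0
        have hball : ∀ᶠ t in nhds (0:ℝ), L t ∈ ball (0:EuclideanSpace ℝ (Fin n)) 1 :=
          h8.eventually_mem (hB.mem_nhds hx₀ball)
        filter_upwards [hball] with t ht
        have := hx₀min (ball_subset_closedBall ht)
        simpa [hgdef, hL0] using this
      set G : ℝ → ℝ := fun t => fderiv ℝ u (L t) e with hGdef
      -- the polynomial part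
      set p : ℝ → ℝ := fun s => c * s ^ 2 + 2 * c * a * s + (c * ‖x₀‖ ^ 2 - c) with hpdef
      have hp : ∀ t : ℝ, HasDerivAt p (2 * c * t + 2 * c * a) t := by
        intro t
        have h1 := ((hasDerivAt_pow 2 t).const_mul c)
        have h2 := (hasDerivAt_id t).const_mul (2 * c * a)
        have h3 := (h1.add h2).add_const (c * ‖x₀‖ ^ 2 - c)
        have h4 : HasDerivAt p (c * (↑2 * t ^ (2 - 1)) + 2 * c * a * 1) t := h3
        convert h4 using 1
        simp; ring
      have hgp : g = fun s => u (L s) + p s := by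
        funext s
        rw [hgdef]
        simp only [hvdef, hpdef]
        rw [hnorm s]
        ring
      have hSopen : IsOpen (L ⁻¹' ball (0:EuclideanSpace ℝ (Fin n)) 1) := hB.preimage hLcont
      have hS0 : (0:ℝ) ∈ L ⁻¹' ball (0:EuclideanSpace ℝ (Fin n)) 1 := by
        simp only [Set.mem_preimage, hL0]; exact hx₀ball
      have hgd : ∀ᶠ t in nhds (0:ℝ), HasDerivAt g (G t + (2 * c * t + 2 * c * a)) t := by
        filter_upwards [hSopen.mem_nhds hS0] with t ht
        have hud : DifferentiableAt ℝ u (L t) := hudiff.differentiableAt (hB.mem_nhds ht)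
        have h1 : HasDerivAt (fun s => u (L s)) (G t) t :=
          hud.hasFDerivAt.comp_hasDerivAt t (hLd t)
        rw [hgp]
        exact h1.add (hp t)
      -- derivative of G at 0
      set Ψ : EuclideanSpace ℝ (Fin n) → ℝ := fun y => fderiv ℝ u y e with hΨdef
      have hΨdiff : DifferentiableAt ℝ Ψ x₀ := by
        have h9 : DifferentiableAt ℝ (fderiv ℝ u) x₀ :=
          (hu1.differentiableOn (by norm_num)).differentiableAt (hB.mem_nhds hx₀ball)
        exact h9.clm_apply (differentiableAt_const e)
      have hGd0 : HasDerivAt G (fderiv ℝ Ψ x₀ e) 0 := by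
        have h10 : HasFDerivAt Ψ (fderiv ℝ Ψ x₀) (L 0) := hL0 ▸ hΨdiff.hasFDerivAt
        exact h10.comp_hasDerivAt 0 (hLd 0)
      have hGd : HasDerivAt (fun t => G t + (2 * c * t + 2 * c * a))
          (fderiv ℝ Ψ x₀ e + 2 * c) 0 := by
        have h11 : HasDerivAt (fun t : ℝ => 2 * c * t + 2 * c * a) (2 * c) 0 := by
          simpa using ((hasDerivAt_id (0:ℝ)).const_mul (2 * c)).add_const (2 * c * a)
        exact hGd0.add h11
      have hkey := second_deriv_nonneg_at_localMin hgmin hgd hGd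
      have : fderiv ℝ (fun y => fderiv ℝ u y e) x₀ e = fderiv ℝ Ψ x₀ e := rfl
      rw [hedef] at this ⊢
      rw [this]
      linarith
    have hlapge : -(2 * (n:ℝ) * c) ≤ lap u x₀ := by
      rw [lap]
      calc -(2 * (n:ℝ) * c) = ∑ _i : Fin n, -(2 * c) := by
            rw [Finset.sum_const, Finset.card_univ, Fintype.card_fin]; ring
        _ ≤ _ := Finset.sum_le_sum (fun i _ => hsummand i)
    rw [h2nc] at hlapge
    linarith
  constructor
  · intro x hx
    have h1 := hx₀min (ball_subset_closedBall hx)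
    have h2 : v x = u x - c * (1 - ‖x‖ ^ 2) := rfl
    have h3 : v x₀ ≤ v x := h1
    linarith
  · have hmain0 : c ≤ u 0 := by
      have h1 := hx₀min (ball_subset_closedBall (mem_ball_self one_pos))
      have h2 : v 0 = u 0 - c * (1 - ‖(0:EuclideanSpace ℝ (Fin n))‖ ^ 2) := rfl
      rw [norm_zero] at h2
      have h3 : v x₀ ≤ v 0 := h1
      nlinarith
    have himg : BddAbove ((fun x => |u x|) '' closedBall (0:EuclideanSpace ℝ (Fin n)) 1) :=
      (isCompact_closedBall (0:EuclideanSpace ℝ (Fin n)) 1).bddAbove_image huc.abs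
    have hbdd : BddAbove (Set.range fun x : (ball (0:EuclideanSpace ℝ (Fin n)) 1 : Set (EuclideanSpace ℝ (Fin n))) => |u x.1|) := by
      apply himg.mono
      rintro y ⟨x, rfl⟩
      exact ⟨x.1, ball_subset_closedBall x.2, rfl⟩
    have h4 : |u 0| ≤ supAbsOn (ball (0:EuclideanSpace ℝ (Fin n)) 1) u :=
      le_ciSup hbdd (⟨0, mem_ball_self one_pos⟩ : (ball (0:EuclideanSpace ℝ (Fin n)) 1 : Set (EuclideanSpace ℝ (Fin n))))
    exact le_trans (le_trans hmain0 (le_abs_self _)) h4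
end
end
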